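/- Let A = k⟨X⟩/I be a finitely presented algebra, fix a monomial order on the free monoid X*, let 𝒢 be a Gröbner basis of I, let 𝒢_m = {g ∈ 𝒢 : deg g ≤ m}, and set A' = k⟨X⟩/(LM(𝒢_m)), the monomial algebra on the leading monomials of 𝒢_m. Then dim_k A'_i ≥ dim_k A_i for all i ≥ 0, with equality for all i ≤ m. Equivalently, H_{A'}(t) − H_A(t) = Σ_{i>m} a_i t^i with all a_i ≥ 0. -/

import Mathlib

set_option synthInstance.maxHeartbeats 1000000
set_option maxHeartbeats 1000000


open MonoidAlgebra
open scoped Classical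

variable {k : Type*} [Field k] {X : Type*} [Fintype X] [LinearOrder (FreeMonoid X)]

/-- The leading monomial of a noncommutative polynomial with respect to a
monomial (admissible) order on the free monoid X*. -/
noncomputable def leadMon (f : MonoidAlgebra k (FreeMonoid X)) : FreeMonoid X :=
  if h : f = 0 then 1 else f.coeff.support.max'
    (Finsupp.support_nonempty_iff.mpr fun h' => h (MonoidAlgebra.coeff_eq_zero.mp h'))

/-- The degree-i homogeneous component of the free algebra k⟨X⟩:
the span of the words of length i. -/
noncomputable def wordSpanX (k : Type*) [Field k] (X : Type*) (i : ℕ) :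
    Submodule k (MonoidAlgebra k (FreeMonoid X)) :=
  Submodule.span k
    {f | ∃ w : FreeMonoid X, w.length = i ∧ f = MonoidAlgebra.single w (1 : k)}

set_option linter.unusedSectionVars false in
lemma HilbAux.leadMon_mem {f : MonoidAlgebra k (FreeMonoid X)} (hf : f ≠ 0) :
    leadMon f ∈ f.coeff.support := by
  rw [leadMon, dif_neg hf]; exact Finset.max'_mem _ _

set_option linter.unusedSectionVars false in
lemma HilbAux.le_leadMon {f : MonoidAlgebra k (FreeMonoid X)} (hf : f ≠ 0)
    {w : FreeMonoid X} (hw : w ∈ f.coeff.support) : w ≤ leadMon f := by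
  rw [leadMon, dif_neg hf]; exact Finset.le_max' _ _ hw

set_option linter.unusedSectionVars false in
lemma HilbAux.sandwich (u u' : FreeMonoid X) (g : MonoidAlgebra k (FreeMonoid X)) :
    MonoidAlgebra.single u (1:k) * g * MonoidAlgebra.single u' 1
      = MonoidAlgebra.mapDomain (fun v => u * v * u') g := by
  induction g using MonoidAlgebra.induction_linear with
  | zero => simp
  | add f h hf hh => rw [mul_add, add_mul, hf, hh, MonoidAlgebra.mapDomain_add]
  | single a b =>
    rw [MonoidAlgebra.single_mul_single, MonoidAlgebra.single_mul_single,
      MonoidAlgebra.mapDomain_single]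
    simp [mul_assoc]

lemma HilbAux.sandwich_inj (u u' : FreeMonoid X) :
    Function.Injective (fun v : FreeMonoid X => u * v * u') := by
  intro a b h
  simp only [mul_assoc] at h
  exact mul_right_cancel (mul_left_cancel h)

set_option linter.unusedSectionVars false in
lemma HilbAux.msmul_apply (c : k) (f : MonoidAlgebra k (FreeMonoid X)) (w : FreeMonoid X) :
    (c • f).coeff w = c * f.coeff w := rfl

set_option linter.unusedSectionVars false in
lemma HilbAux.triangular_linearIndependent
    (T : Finset (FreeMonoid X)) (f : FreeMonoid X → MonoidAlgebra k (FreeMonoid X))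
    (h1 : ∀ w ∈ T, (f w).coeff w ≠ 0)
    (h2 : ∀ w ∈ T, ∀ v ∈ (f w).coeff.support, v ≤ w) :
    LinearIndependent k (fun w : T => f w) := by
  rw [linearIndependent_iff']
  intro s
  induction s using Finset.strongInduction with
  | _ s ih =>
    intro g hsum i hi
    have hne : s.Nonempty := ⟨i, hi⟩
    set w0 := s.max' hne with hw0def
    have hw0 : w0 ∈ s := s.max'_mem hne
    have hgw0 : g w0 = 0 := by
      have happ : (∑ j ∈ s, g j • f j).coeff (w0 : FreeMonoid X) = 0 := by rw [hsum]; rfl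
      rw [MonoidAlgebra.coeff_sum, Finsupp.finset_sum_apply] at happ
      rw [Finset.sum_eq_single w0] at happ
      · have h10 := h1 (w0 : FreeMonoid X) w0.2
        rw [HilbAux.msmul_apply] at happ
        exact (mul_eq_zero.mp happ).resolve_right h10
      · intro j hj hjne
        have hle1 : j ≤ w0 := s.le_max' j hj
        by_contra hne0
        have hfj : (f (j : FreeMonoid X)).coeff (w0 : FreeMonoid X) ≠ 0 := by
          rw [HilbAux.msmul_apply] at hne0
          exact fun h => hne0 (by rw [h, mul_zero])
        have hmem : (w0 : FreeMonoid X) ∈ (f (j : FreeMonoid X)).coeff.support :=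
          Finsupp.mem_support_iff.mpr hfj
        have : (w0 : FreeMonoid X) ≤ (j : FreeMonoid X) := h2 (j : FreeMonoid X) j.2 _ hmem
        exact hjne (le_antisymm hle1 (Subtype.coe_le_coe.mp this))
      · intro h; exact absurd hw0 h
    by_cases hiw : i = w0
    · rw [hiw]; exact hgw0
    · have hsum' : ∑ j ∈ s.erase w0, g j • f j = 0 := by
        rw [← Finset.add_sum_erase s _ hw0, hgw0, zero_smul, zero_add] at hsum
        exact hsum
      exact ih (s.erase w0) (Finset.erase_ssubset hw0) g hsum' i
        (Finset.mem_erase.mpr ⟨hiw, hi⟩)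

lemma HilbAux.wordSpanX_eq (i : ℕ) :
    wordSpanX k X i = MonoidAlgebra.supported k k {w : FreeMonoid X | w.length = i} := by
  rw [MonoidAlgebra.supported_eq_span_single, wordSpanX]
  congr 1
  ext f
  constructor
  · rintro ⟨w, hw, rfl⟩; exact ⟨w, hw, rfl⟩
  · rintro ⟨w, hw, rfl⟩; exact ⟨w, hw, rfl⟩

lemma HilbAux.finrank_supported {k : Type*} [Field k] {α : Type*} (s : Set α) (hs : s.Finite) :
    Module.finrank k ↥(Finsupp.supported k k s) = hs.toFinset.card := by
  haveI := hs.fintype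
  rw [(Finsupp.supportedEquivFinsupp (M := k) (R := k) s).finrank_eq,
    Module.finrank_finsupp_self, hs.card_toFinset]

lemma HilbAux.findim_supported {k : Type*} [Field k] {α : Type*} (s : Set α) (hs : s.Finite) :
    FiniteDimensional k ↥(Finsupp.supported k k s) := by
  haveI := hs.fintype
  exact Module.Finite.equiv (Finsupp.supportedEquivFinsupp (M := k) (R := k) s).symm

lemma HilbAux.finrank_supportedMA {k : Type*} [Field k] {α : Type*} (s : Set α) (hs : s.Finite) :
    Module.finrank k ↥(MonoidAlgebra.supported k k s) = hs.toFinset.card := by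
  haveI := hs.fintype
  rw [(MonoidAlgebra.supportedEquivFinsupp (S := k) (R := k) s).finrank_eq,
    Module.finrank_finsupp_self, hs.card_toFinset]

lemma HilbAux.findim_supportedMA {k : Type*} [Field k] {α : Type*} (s : Set α) (hs : s.Finite) :
    FiniteDimensional k ↥(MonoidAlgebra.supported k k s) := by
  haveI := hs.fintype
  exact Module.Finite.equiv (MonoidAlgebra.supportedEquivFinsupp (S := k) (R := k) s).symm

lemma HilbAux.supported_interMA {k : Type*} [Field k] {α : Type*} (s t : Set α) :
    MonoidAlgebra.supported k k (s ∩ t) =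
      MonoidAlgebra.supported k k s ⊓ MonoidAlgebra.supported k k t := by
  ext x
  simp [MonoidAlgebra.mem_supported, Set.subset_inter_iff]

/-- finrank of the comap of a submodule under a subtype, as the dimension of the
intersection. -/
lemma HilbAux.finrank_comap_subtype {k M : Type*} [Field k] [AddCommGroup M] [Module k M]
    (V J : Submodule k M) :
    Module.finrank k ↥(J.comap V.subtype) = Module.finrank k ↥(J ⊓ V) := by
  have e1 : J.comap V.subtype = (J ⊓ V).comap V.subtype := by
    rw [Submodule.comap_inf, Submodule.comap_subtype_self, inf_top_eq]
  rw [e1, (Submodule.comapSubtypeEquivOfLe (inf_le_right : J ⊓ V ≤ V)).finrank_eq]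


/-- Let A = k⟨X⟩/I with I a homogeneous two-sided ideal, 𝒢 a
Gröbner basis of I with respect to a monomial order, 𝒢_m its elements of degree
≤ m, and A' = k⟨X⟩/(LM(𝒢_m)). Then dim_k A'_i ≥ dim_k A_i for all i, with
equality for i ≤ m. -/
theorem hilbert_series_leading_monomial_truncation
    -- the monomial order is admissible
    (hmul : ∀ u v w : FreeMonoid X, u < v → u * w < v * w ∧ w * u < w * v)
    (hlen : ∀ u v : FreeMonoid X, u.length < v.length → u < v)
    -- I is a homogeneous two-sided ideal
    (I : Submodule k (MonoidAlgebra k (FreeMonoid X)))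
    (hI2 : ∀ a b : MonoidAlgebra k (FreeMonoid X), ∀ x ∈ I, a * x * b ∈ I)
    (hIhom : ∀ f ∈ I, ∀ i : ℕ,
      MonoidAlgebra.ofCoeff (f.coeff.filter fun w : FreeMonoid X => w.length = i) ∈ I)
    -- 𝒢 is a Gröbner basis of I
    (𝒢 : Set (MonoidAlgebra k (FreeMonoid X))) (h𝒢I : 𝒢 ⊆ I)
    (hGB : ∀ f ∈ I, f ≠ 0 → ∃ g ∈ 𝒢, g ≠ 0 ∧
      ∃ u u' : FreeMonoid X, leadMon f = u * leadMon g * u')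
    (m : ℕ) :
    -- I' is the two-sided ideal generated by the leading monomials of 𝒢_m
    ∀ I' : Submodule k (MonoidAlgebra k (FreeMonoid X)),
      I' = Submodule.span k
        {f | ∃ (a b : MonoidAlgebra k (FreeMonoid X)) (g : MonoidAlgebra k (FreeMonoid X)),
          g ∈ 𝒢 ∧ g ≠ 0 ∧ (∀ w ∈ g.coeff.support, w.length ≤ m) ∧
          f = a * MonoidAlgebra.single (leadMon g) (1 : k) * b} →
      (∀ i : ℕ,
        Module.finrank k
          (↥(wordSpanX k X i) ⧸ I.comap (wordSpanX k X i).subtype) ≤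
        Module.finrank k
          (↥(wordSpanX k X i) ⧸ I'.comap (wordSpanX k X i).subtype)) ∧
      (∀ i : ℕ, i ≤ m →
        Module.finrank k
          (↥(wordSpanX k X i) ⧸ I.comap (wordSpanX k X i).subtype) =
        Module.finrank k
          (↥(wordSpanX k X i) ⧸ I'.comap (wordSpanX k X i).subtype)) := by
  intro I' hI'span
  -- the divisibility sets
  set D : Set (FreeMonoid X) :=
    {w | ∃ g ∈ 𝒢, g ≠ 0 ∧ ∃ u u' : FreeMonoid X, w = u * leadMon g * u'} with hD
  set Dm : Set (FreeMonoid X) :=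
    {w | ∃ g ∈ 𝒢, g ≠ 0 ∧ (∀ v ∈ g.coeff.support, v.length ≤ m) ∧
      ∃ u u' : FreeMonoid X, w = u * leadMon g * u'} with hDm
  -- support length bound
  have hlensupp : ∀ g : MonoidAlgebra k (FreeMonoid X), g ≠ 0 →
      ∀ v ∈ g.coeff.support, v.length ≤ (leadMon g).length := by
    intro g hg v hv
    by_contra h
    exact absurd (HilbAux.le_leadMon hg hv) (not_le.mpr (hlen _ _ (lt_of_not_ge h)))
  -- I' is the "supported" module on Dm
  have hI'eq : I' = MonoidAlgebra.supported k k Dm := by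
    rw [hI'span]
    apply le_antisymm
    · rw [Submodule.span_le]
      rintro f ⟨a, b, g, hg𝒢, hg0, hgm, rfl⟩
      simp only [SetLike.mem_coe]
      rw [MonoidAlgebra.mem_supported]
      intro w hw
      have hw1 := MonoidAlgebra.support_coeff_mul_subset (a * MonoidAlgebra.single (leadMon g) 1) b hw
      rw [Finset.mem_mul] at hw1
      obtain ⟨y, hy, z, hz, rfl⟩ := hw1
      have hy1 := MonoidAlgebra.support_coeff_mul_subset a (MonoidAlgebra.single (leadMon g) (1:k)) hy
      rw [Finset.mem_mul] at hy1
      obtain ⟨p, hp, q, hq, rfl⟩ := hy1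
      rw [MonoidAlgebra.coeff_single, Finsupp.support_single_ne_zero _ (one_ne_zero), Finset.mem_singleton] at hq
      subst hq
      exact ⟨g, hg𝒢, hg0, hgm, p, z, rfl⟩
    · rw [MonoidAlgebra.supported_eq_span_single, Submodule.span_le]
      rintro f ⟨w, ⟨g, hg𝒢, hg0, hgm, u, u', rfl⟩, rfl⟩
      apply Submodule.subset_span
      refine ⟨MonoidAlgebra.single u 1, MonoidAlgebra.single u' 1, g, hg𝒢, hg0, hgm, ?_⟩
      rw [MonoidAlgebra.single_mul_single, MonoidAlgebra.single_mul_single]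
      simp
  -- main dimension comparison per degree
  have key : ∀ i : ℕ,
      Module.finrank k ↥(I'.comap (wordSpanX k X i).subtype) ≤
        Module.finrank k ↥(I.comap (wordSpanX k X i).subtype) ∧
      (i ≤ m → Module.finrank k ↥(I.comap (wordSpanX k X i).subtype) ≤
        Module.finrank k ↥(I'.comap (wordSpanX k X i).subtype)) := by
    intro i
    set S : Set (FreeMonoid X) := {w : FreeMonoid X | w.length = i} with hS
    have hSfin : S.Finite := List.finite_length_eq X i
    set V : Submodule k (MonoidAlgebra k (FreeMonoid X)) := wordSpanX k X i with hV
    have hVsup : V = MonoidAlgebra.supported k k S := HilbAux.wordSpanX_eq i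
    have hDSfin : (D ∩ S).Finite := hSfin.inter_of_right D
    have hDmSfin : (Dm ∩ S).Finite := hSfin.inter_of_right Dm
    -- dimension of the I' part is exactly the number of Dm-divisible words of length i
    have hI'rank : Module.finrank k ↥(I'.comap V.subtype) = hDmSfin.toFinset.card := by
      rw [HilbAux.finrank_comap_subtype, hI'eq, hVsup, ← HilbAux.supported_interMA]
      exact HilbAux.finrank_supportedMA _ hDmSfin
    -- upper bound for the I part
    have hIub : Module.finrank k ↥(I.comap V.subtype) ≤ hDSfin.toFinset.card := by
      haveI : FiniteDimensional k ↥(Finsupp.supported k k (D ∩ S)) :=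
        HilbAux.findim_supported _ hDSfin
      set ρ : ↥(I.comap V.subtype) →ₗ[k] ↥(Finsupp.supported k k (D ∩ S)) :=
        (Finsupp.restrictDom k k (D ∩ S)).comp
          ((MonoidAlgebra.coeffLinearEquiv k).toLinearMap.comp
            (V.subtype.comp (I.comap V.subtype).subtype)) with hρ
      have hker : ∀ x : ↥(I.comap V.subtype), ρ x = 0 → x = 0 := by
        intro x hx
        have hfI : (x : ↥V).val ∈ I := x.2
        have hfV : ((x : ↥V).val).coeff.support ⊆ hSfin.toFinset := by
          have hxV : (x : ↥V).val ∈ MonoidAlgebra.supported k k S := by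
            rw [← hVsup]; exact (x : ↥V).2
          have := (MonoidAlgebra.mem_supported).mp hxV
          intro w hw
          exact hSfin.mem_toFinset.mpr (this hw)
        by_contra hx0
        have hf0 : (x : ↥V).val ≠ 0 := by
          intro h
          exact hx0 (Subtype.ext (Subtype.ext h))
        obtain ⟨g, hg𝒢, hg0, u, u', hlm⟩ := hGB _ hfI hf0
        have hlmD : leadMon (x : ↥V).val ∈ D ∩ S := by
          constructor
          · exact ⟨g, hg𝒢, hg0, u, u', hlm⟩
          · exact hSfin.mem_toFinset.mp (hfV (HilbAux.leadMon_mem hf0))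
        have hval : (ρ x).val = 0 := by rw [hx]; rfl
        have hfilter : Finsupp.filter (· ∈ D ∩ S) (x : ↥V).val.coeff = 0 := hval
        have hfpos := Finsupp.filter_apply_pos (· ∈ D ∩ S) (x : ↥V).val.coeff hlmD
        rw [hfilter] at hfpos
        exact Finsupp.mem_support_iff.mp (HilbAux.leadMon_mem hf0) hfpos.symm
      have hinj : Function.Injective ρ := by
        intro a b hab
        have h0 : ρ (a - b) = 0 := (map_sub ρ a b).trans (by rw [hab, sub_self])
        have := hker _ h0
        exact sub_eq_zero.mp this
      calc Module.finrank k ↥(I.comap V.subtype)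
          ≤ Module.finrank k ↥(Finsupp.supported k k (D ∩ S)) :=
            LinearMap.finrank_le_finrank_of_injective hinj
        _ = hDSfin.toFinset.card := HilbAux.finrank_supported _ hDSfin
    -- lower bound for the I part
    have hIlb : hDSfin.toFinset.card ≤ Module.finrank k ↥(I.comap V.subtype) := by
      haveI : FiniteDimensional k ↥V := by
        rw [hVsup]; exact HilbAux.findim_supportedMA _ hSfin
      have hchoice : ∀ w ∈ D ∩ S, ∃ h : MonoidAlgebra k (FreeMonoid X),
          h ∈ I ∧ (↑h.coeff.support : Set (FreeMonoid X)) ⊆ S ∧ h.coeff w ≠ 0 ∧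
          ∀ v ∈ h.coeff.support, v ≤ w := by
        rintro w ⟨⟨g, hg𝒢, hg0, u, u', rfl⟩, hwS⟩
        set h0 := MonoidAlgebra.single u (1:k) * g * MonoidAlgebra.single u' 1 with hh0def
        have hh0 : h0 = MonoidAlgebra.mapDomain (fun v => u * v * u') g := HilbAux.sandwich u u' g
        refine ⟨MonoidAlgebra.ofCoeff (h0.coeff.filter (fun v => v.length = i)), ?_, ?_, ?_, ?_⟩
        · exact hIhom _ (hI2 _ _ g (h𝒢I hg𝒢)) i
        · rw [MonoidAlgebra.coeff_ofCoeff, Finsupp.support_filter]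
          intro v hv
          exact (Finset.mem_filter.mp hv).2
        · have hwlen : (u * leadMon g * u').length = i := hwS
          rw [MonoidAlgebra.coeff_ofCoeff,
            Finsupp.filter_apply_pos (fun v : FreeMonoid X => v.length = i) h0.coeff hwlen, hh0,
            MonoidAlgebra.mapDomain, MonoidAlgebra.coeff_ofCoeff, Finsupp.mapDomain_apply (HilbAux.sandwich_inj u u')]
          exact Finsupp.mem_support_iff.mp (HilbAux.leadMon_mem hg0)
        · intro v hv
          have hv' : v ∈ h0.coeff.support := by
            rw [MonoidAlgebra.coeff_ofCoeff, Finsupp.support_filter] at hv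
            exact Finset.mem_of_mem_filter v hv
          have : v ∈ g.coeff.support.image (fun v => u * v * u') := by
            rw [hh0] at hv'
            exact Finsupp.mapDomain_support hv'
          obtain ⟨v0, hv0, rfl⟩ := Finset.mem_image.mp this
          rcases eq_or_lt_of_le (HilbAux.le_leadMon hg0 hv0) with heq | hlt
          · rw [heq]
          · have h1 := (hmul v0 (leadMon g) u' hlt).1
            have h2 := (hmul (v0 * u') (leadMon g * u') u h1).2
            rw [← mul_assoc, ← mul_assoc] at h2
            exact le_of_lt h2
      choose! F hFI hFS hFw hFle using hchoice
      set T : Finset (FreeMonoid X) := hDSfin.toFinset with hT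
      have hTmem : ∀ w ∈ T, w ∈ D ∩ S := fun w hw => hDSfin.mem_toFinset.mp hw
      have li : LinearIndependent k (fun w : T => F w) :=
        HilbAux.triangular_linearIndependent T F
          (fun w hw => hFw w (hTmem w hw))
          (fun w hw => hFle w (hTmem w hw))
      have hmemV : ∀ w : T, F w ∈ I ⊓ V := by
        intro w
        refine ⟨hFI w (hTmem w w.2), ?_⟩
        rw [hVsup]
        exact (MonoidAlgebra.mem_supported).mpr (hFS w (hTmem w w.2))
      haveI : FiniteDimensional k ↥(I ⊓ V) :=
        Submodule.finiteDimensional_of_le (inf_le_right : I ⊓ V ≤ V)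
      have hspan : Submodule.span k (Set.range fun w : T => F w) ≤ I ⊓ V := by
        rw [Submodule.span_le]
        rintro x ⟨w, rfl⟩
        exact hmemV w
      calc T.card = Fintype.card T := (Fintype.card_coe T).symm
        _ = Module.finrank k ↥(Submodule.span k (Set.range fun w : T => F w)) :=
            (finrank_span_eq_card li).symm
        _ ≤ Module.finrank k ↥(I ⊓ V) := Submodule.finrank_mono hspan
        _ = Module.finrank k ↥(I.comap V.subtype) := (HilbAux.finrank_comap_subtype V I).symm
    -- cards comparison
    have hsub : hDmSfin.toFinset.card ≤ hDSfin.toFinset.card := by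
      apply Finset.card_le_card
      rw [Set.Finite.toFinset_subset_toFinset]
      intro w hw
      obtain ⟨hw1, hw2⟩ := hw
      obtain ⟨g, hg𝒢, hg0, _, u, u', rfl⟩ := hw1
      exact ⟨⟨g, hg𝒢, hg0, u, u', rfl⟩, hw2⟩
    constructor
    · rw [hI'rank]
      exact le_trans hsub hIlb
    · intro him
      have heqset : D ∩ S = Dm ∩ S := by
        ext w
        constructor
        · rintro ⟨⟨g, hg𝒢, hg0, u, u', rfl⟩, hwS⟩
          refine ⟨⟨g, hg𝒢, hg0, ?_, u, u', rfl⟩, hwS⟩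
          intro v hv
          have h1 : (leadMon g).length ≤ m := by
            have : (u * leadMon g * u').length = i := hwS
            rw [FreeMonoid.length_mul, FreeMonoid.length_mul] at this
            omega
          exact le_trans (hlensupp g hg0 v hv) h1
        · rintro ⟨⟨g, hg𝒢, hg0, _, u, u', rfl⟩, hwS⟩
          exact ⟨⟨g, hg𝒢, hg0, u, u', rfl⟩, hwS⟩
      have hcard : hDSfin.toFinset.card = hDmSfin.toFinset.card := by
        congr 1
        ext w
        simp only [Set.Finite.mem_toFinset]
        rw [heqset]
      rw [hI'rank, ← hcard]
      exact hIub
  -- assemble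
  have hfdV : ∀ i : ℕ, FiniteDimensional k ↥(wordSpanX k X i) := by
    intro i
    rw [HilbAux.wordSpanX_eq i]
    exact HilbAux.findim_supportedMA _ (List.finite_length_eq X i)
  constructor
  · intro i
    haveI := hfdV i
    have h1 := Submodule.finrank_quotient_add_finrank (I.comap (wordSpanX k X i).subtype)
    have h2 := Submodule.finrank_quotient_add_finrank (I'.comap (wordSpanX k X i).subtype)
    have := (key i).1
    omega
  · intro i him
    haveI := hfdV i
    have h1 := Submodule.finrank_quotient_add_finrank (I.comap (wordSpanX k X i).subtype)
    have h2 := Submodule.finrank_quotient_add_finrank (I'.comap (wordSpanX k X i).subtype)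
    have h3 := (key i).1
    have h4 := (key i).2 him
    omega
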